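/- Let p be a prime and k a commutative ring with p·1 = 0, and let W = W_d(k) be the d-th Weyl algebra over k (d ≥ 1). Then the center Z of W equals the k-subalgebra of W generated by the elements t_1^p, …, t_d^p, ∂_1^p, …, ∂_d^p, and W is a free Z-module of rank p^{2d}: the monomials t^I·∂^J = t_1^{i_1}⋯t_d^{i_d}·∂_1^{j_1}⋯∂_d^{j_d}, where all exponents i_r, j_r range over {0, 1, …, p−1}, form a Z-basis of W. -/

import Mathlib

noncomputable section

/-- The defining relations of the `d`-th Weyl algebra: `t_i t_j = t_j t_i`,
`∂_i ∂_j = ∂_j ∂_i` and `∂_i t_j = t_j ∂_i + δ_{ij}`. -/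
inductive WeylRel (k : Type*) [CommRing k] (d : ℕ) :
    FreeAlgebra k (Fin d ⊕ Fin d) → FreeAlgebra k (Fin d ⊕ Fin d) → Prop
  | tt (i j : Fin d) :
      WeylRel k d (FreeAlgebra.ι k (Sum.inl i) * FreeAlgebra.ι k (Sum.inl j))
        (FreeAlgebra.ι k (Sum.inl j) * FreeAlgebra.ι k (Sum.inl i))
  | dd (i j : Fin d) :
      WeylRel k d (FreeAlgebra.ι k (Sum.inr i) * FreeAlgebra.ι k (Sum.inr j))
        (FreeAlgebra.ι k (Sum.inr j) * FreeAlgebra.ι k (Sum.inr i))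
  | dt (i j : Fin d) :
      WeylRel k d (FreeAlgebra.ι k (Sum.inr i) * FreeAlgebra.ι k (Sum.inl j))
        (FreeAlgebra.ι k (Sum.inl j) * FreeAlgebra.ι k (Sum.inr i) + if i = j then 1 else 0)

/-- The `d`-th Weyl algebra over `k`: the free algebra on `t_1,…,t_d,∂_1,…,∂_d` modulo the
two-sided ideal generated by the Weyl relations. -/
abbrev WeylAlgebra (k : Type*) [CommRing k] (d : ℕ) := RingQuot (WeylRel k d)

namespace WeylAlgebra

variable (k : Type*) [CommRing k] (d : ℕ)

/-- The generator `t_i` of the Weyl algebra. -/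
def t (i : Fin d) : WeylAlgebra k d :=
  RingQuot.mkAlgHom k (WeylRel k d) (FreeAlgebra.ι k (Sum.inl i))

/-- The generator `∂_i` of the Weyl algebra. -/
def del (i : Fin d) : WeylAlgebra k d :=
  RingQuot.mkAlgHom k (WeylRel k d) (FreeAlgebra.ι k (Sum.inr i))

/-- The monomial `t^I = t_1^{i_1} ⋯ t_d^{i_d}` in the Weyl algebra. -/
def monomialT (I : Fin d → ℕ) : WeylAlgebra k d :=
  ((List.finRange d).map fun i => t k d i ^ I i).prod

/-- The monomial `∂^J = ∂_1^{j_1} ⋯ ∂_d^{j_d}` in the Weyl algebra. -/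
def monomialD (J : Fin d → ℕ) : WeylAlgebra k d :=
  ((List.finRange d).map fun i => del k d i ^ J i).prod

end WeylAlgebra


namespace Weyl

open WeylAlgebra

variable {k : Type*} [CommRing k] {d : ℕ}

lemma t_comm (i j : Fin d) : Commute (t k d i) (t k d j) := by
  unfold Commute SemiconjBy
  unfold t
  rw [← map_mul, ← map_mul, RingQuot.mkAlgHom_rel k (WeylRel.tt i j)]

lemma del_comm (i j : Fin d) : Commute (del k d i) (del k d j) := by
  unfold Commute SemiconjBy
  unfold del
  rw [← map_mul, ← map_mul, RingQuot.mkAlgHom_rel k (WeylRel.dd i j)]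

lemma del_mul_t (i j : Fin d) :
    del k d i * t k d j = t k d j * del k d i + if i = j then 1 else 0 := by
  unfold t del
  rw [← map_mul, ← map_mul, RingQuot.mkAlgHom_rel k (WeylRel.dt i j)]
  rw [map_add]
  congr 1
  split <;> simp

lemma del_mul_t_self (i : Fin d) :
    del k d i * t k d i = t k d i * del k d i + 1 := by
  simpa using del_mul_t i i

lemma del_t_commute {i j : Fin d} (h : i ≠ j) : Commute (del k d i) (t k d j) := by
  unfold Commute SemiconjBy
  rw [del_mul_t]
  simp [h]

end Weyl

section ListLemmas

variable {M : Type*} [Monoid M] {α : Type*}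

lemma list_prod_map_mul_of_commute (f g : α → M)
    (h : ∀ a b, Commute (f a) (g b)) :
    ∀ l : List α, (l.map fun a => f a * g a).prod = (l.map f).prod * (l.map g).prod := by
  intro l
  induction l with
  | nil => simp
  | cons a l ih =>
    simp only [List.map_cons, List.prod_cons, ih]
    have hc : Commute (g a) ((l.map f).prod) := by
      apply Commute.list_prod_right
      intro x hx
      obtain ⟨b, _, rfl⟩ := List.mem_map.mp hx
      exact (h b a).symm
    rw [mul_assoc, mul_assoc, ← mul_assoc (g a), hc.eq, mul_assoc]

lemma list_prod_eq_single {f : α → M} {l : List α} (hl : l.Nodup) {i : α} (hi : i ∈ l)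
    (hf : ∀ j ∈ l, j ≠ i → f j = 1) : (l.map f).prod = f i := by
  induction l with
  | nil => simp at hi
  | cons a l ih =>
    simp only [List.map_cons, List.prod_cons]
    rcases List.mem_cons.mp hi with rfl | hi'
    · have : ∀ j ∈ l, f j = 1 := fun j hj =>
        hf j (List.mem_cons_of_mem _ hj) (fun h => (List.nodup_cons.mp hl).1 (h ▸ hj))
      rw [List.prod_eq_one, mul_one]
      intro x hx
      obtain ⟨b, hb, rfl⟩ := List.mem_map.mp hx
      exact this b hb
    · rw [hf a List.mem_cons_self (fun h => (List.nodup_cons.mp hl).1 (h ▸ hi')),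
        one_mul]
      exact ih (List.nodup_cons.mp hl).2 hi'
        (fun j hj => hf j (List.mem_cons_of_mem _ hj))

end ListLemmas

namespace Weyl

open WeylAlgebra

variable {k : Type*} [CommRing k] {d : ℕ}

lemma del_mul_t_pow_succ (i : Fin d) (n : ℕ) :
    del k d i * t k d i ^ (n + 1) = t k d i ^ (n + 1) * del k d i + (n + 1) • t k d i ^ n := by
  induction n with
  | zero => simpa using del_mul_t_self i
  | succ n ih =>
    calc del k d i * t k d i ^ (n + 2)
        = (del k d i * t k d i ^ (n + 1)) * t k d i := by rw [mul_assoc, ← pow_succ]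
      _ = (t k d i ^ (n + 1) * del k d i) * t k d i + (n + 1) • (t k d i ^ n * t k d i) := by
          rw [ih, add_mul, smul_mul_assoc]
      _ = t k d i ^ (n + 1) * (t k d i * del k d i + 1) + (n + 1) • t k d i ^ (n + 1) := by
          rw [mul_assoc, del_mul_t_self, ← pow_succ]
      _ = t k d i ^ (n + 2) * del k d i + (n + 2) • t k d i ^ (n + 1) := by
          rw [mul_add, mul_one, ← mul_assoc, ← pow_succ]
          rw [show (n + 2) • t k d i ^ (n + 1) = t k d i ^ (n+1) + (n + 1) • t k d i ^ (n + 1) by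
            rw [add_smul, add_comm]; simp only [one_smul, nsmul_eq_mul, Nat.cast_ofNat, Nat.cast_add, Nat.cast_one]; rw [two_mul, add_mul, one_mul]; abel]
          abel

lemma del_mul_t_pow (i : Fin d) (n : ℕ) :
    del k d i * t k d i ^ n = t k d i ^ n * del k d i + n • t k d i ^ (n - 1) := by
  cases n with
  | zero => simp
  | succ n => simpa using del_mul_t_pow_succ i n

lemma del_pow_succ_mul_t (i : Fin d) (n : ℕ) :
    del k d i ^ (n + 1) * t k d i = t k d i * del k d i ^ (n + 1) + (n + 1) • del k d i ^ n := by
  induction n with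
  | zero => simpa using del_mul_t_self i
  | succ n ih =>
    calc del k d i ^ (n + 2) * t k d i
        = del k d i * (del k d i ^ (n + 1) * t k d i) := by rw [← mul_assoc, ← pow_succ']
      _ = del k d i * (t k d i * del k d i ^ (n + 1)) + (n + 1) • (del k d i * del k d i ^ n) := by
          rw [ih, mul_add, mul_smul_comm]
      _ = (t k d i * del k d i + 1) * del k d i ^ (n + 1) + (n + 1) • del k d i ^ (n + 1) := by
          rw [← mul_assoc, del_mul_t_self, ← pow_succ']
      _ = t k d i * del k d i ^ (n + 2) + (n + 2) • del k d i ^ (n + 1) := by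
          rw [add_mul, one_mul, mul_assoc, ← pow_succ']
          rw [show (n + 2) • del k d i ^ (n + 1) = del k d i ^ (n+1) + (n + 1) • del k d i ^ (n + 1) by
            rw [add_smul, add_comm]; simp only [one_smul, nsmul_eq_mul, Nat.cast_ofNat, Nat.cast_add, Nat.cast_one]; rw [two_mul, add_mul, one_mul]; abel]
          abel

lemma del_pow_mul_t (i : Fin d) (n : ℕ) :
    del k d i ^ n * t k d i = t k d i * del k d i ^ n + n • del k d i ^ (n - 1) := by
  cases n with
  | zero => simp
  | succ n => simpa using del_pow_succ_mul_t i n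

end Weyl

namespace Weyl

open WeylAlgebra

variable {k : Type*} [CommRing k] {d : ℕ}

lemma monomialT_add (I I' : Fin d → ℕ) :
    monomialT k d (I + I') = monomialT k d I * monomialT k d I' := by
  unfold monomialT
  rw [← list_prod_map_mul_of_commute (fun i => t k d i ^ I i) (fun i => t k d i ^ I' i)
    (fun a b => (t_comm a b).pow_pow _ _)]
  congr 1
  apply List.map_congr_left
  intro a _
  rw [Pi.add_apply, pow_add]

lemma monomialD_add (J J' : Fin d → ℕ) :
    monomialD k d (J + J') = monomialD k d J * monomialD k d J' := by
  unfold monomialD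
  rw [← list_prod_map_mul_of_commute (fun i => del k d i ^ J i) (fun i => del k d i ^ J' i)
    (fun a b => (del_comm a b).pow_pow _ _)]
  congr 1
  apply List.map_congr_left
  intro a _
  rw [Pi.add_apply, pow_add]

lemma monomialT_single (i : Fin d) (n : ℕ) :
    monomialT k d (Pi.single i n) = t k d i ^ n := by
  unfold monomialT
  rw [list_prod_eq_single (List.nodup_finRange d) (List.mem_finRange i)
    (fun j _ hj => by rw [Pi.single_eq_of_ne hj, pow_zero]), Pi.single_eq_same]

lemma monomialD_single (i : Fin d) (n : ℕ) :
    monomialD k d (Pi.single i n) = del k d i ^ n := by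
  unfold monomialD
  rw [list_prod_eq_single (List.nodup_finRange d) (List.mem_finRange i)
    (fun j _ hj => by rw [Pi.single_eq_of_ne hj, pow_zero]), Pi.single_eq_same]

lemma monomialT_zero : monomialT k d 0 = 1 := by
  unfold monomialT
  rw [List.prod_eq_one]
  intro x hx
  obtain ⟨b, _, rfl⟩ := List.mem_map.mp hx
  simp

lemma monomialD_zero : monomialD k d 0 = 1 := by
  unfold monomialD
  rw [List.prod_eq_one]
  intro x hx
  obtain ⟨b, _, rfl⟩ := List.mem_map.mp hx
  simp

lemma monomialT_decomp (I : Fin d → ℕ) (i : Fin d) :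
    monomialT k d I = t k d i ^ I i * monomialT k d (Function.update I i 0) := by
  have h : I = Pi.single i (I i) + Function.update I i 0 := by
    funext j
    by_cases hj : j = i
    · subst hj; simp
    · simp [Pi.single_eq_of_ne hj, Function.update_of_ne hj]
  conv_lhs => rw [h]
  rw [monomialT_add, monomialT_single]

lemma monomialD_decomp (J : Fin d → ℕ) (i : Fin d) :
    monomialD k d J = del k d i ^ J i * monomialD k d (Function.update J i 0) := by
  have h : J = Pi.single i (J i) + Function.update J i 0 := by
    funext j
    by_cases hj : j = i
    · subst hj; simp
    · simp [Pi.single_eq_of_ne hj, Function.update_of_ne hj]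
  conv_lhs => rw [h]
  rw [monomialD_add, monomialD_single]

lemma t_commute_monomialT (i : Fin d) (I : Fin d → ℕ) :
    Commute (t k d i) (monomialT k d I) := by
  apply Commute.list_prod_right
  intro x hx
  obtain ⟨b, _, rfl⟩ := List.mem_map.mp hx
  exact (t_comm i b).pow_right _

lemma del_commute_monomialD (i : Fin d) (J : Fin d → ℕ) :
    Commute (del k d i) (monomialD k d J) := by
  apply Commute.list_prod_right
  intro x hx
  obtain ⟨b, _, rfl⟩ := List.mem_map.mp hx
  exact (del_comm i b).pow_right _

lemma t_commute_monomialD_update (i : Fin d) (J : Fin d → ℕ) :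
    Commute (t k d i) (monomialD k d (Function.update J i 0)) := by
  apply Commute.list_prod_right
  intro x hx
  obtain ⟨b, _, rfl⟩ := List.mem_map.mp hx
  by_cases hb : b = i
  · subst hb; simp
  · exact ((del_t_commute (k := k) (d := d) (Ne.symm (fun h => hb h.symm))).symm.pow_right _)

lemma del_commute_monomialT_update (i : Fin d) (I : Fin d → ℕ) :
    Commute (del k d i) (monomialT k d (Function.update I i 0)) := by
  apply Commute.list_prod_right
  intro x hx
  obtain ⟨b, _, rfl⟩ := List.mem_map.mp hx
  by_cases hb : b = i
  · subst hb; simp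
  · exact ((del_t_commute (k := k) (d := d) (fun h => hb h.symm)).pow_right _)

lemma sub_single_eq_update (I : Fin d → ℕ) (i : Fin d) :
    I - Pi.single i 1 = Function.update I i (I i - 1) := by
  funext j
  by_cases hj : j = i
  · subst hj; simp [Pi.sub_apply]
  · simp [Pi.sub_apply, Pi.single_eq_of_ne hj, Function.update_of_ne hj]

lemma monomialD_mul_t (J : Fin d → ℕ) (i : Fin d) :
    monomialD k d J * t k d i
      = t k d i * monomialD k d J + (J i) • monomialD k d (J - Pi.single i 1) := by
  have hQ := t_commute_monomialD_update (k := k) (d := d) i J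
  have hd : del k d i ^ (J i - 1) * monomialD k d (Function.update J i 0)
      = monomialD k d (J - Pi.single i 1) := by
    rw [sub_single_eq_update, monomialD_decomp (k := k) (d := d)
      (Function.update J i (J i - 1)) i]
    simp [Function.update_idem]
  rw [monomialD_decomp (k := k) (d := d) J i, mul_assoc, ← hQ.eq, ← mul_assoc,
    del_pow_mul_t, add_mul, mul_assoc, smul_mul_assoc, hd, ← monomialD_decomp]

lemma del_mul_monomialT (I : Fin d → ℕ) (i : Fin d) :
    del k d i * monomialT k d I
      = monomialT k d I * del k d i + (I i) • monomialT k d (I - Pi.single i 1) := by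
  have hQ := del_commute_monomialT_update (k := k) (d := d) i I
  have hd : t k d i ^ (I i - 1) * monomialT k d (Function.update I i 0)
      = monomialT k d (I - Pi.single i 1) := by
    rw [sub_single_eq_update, monomialT_decomp (k := k) (d := d)
      (Function.update I i (I i - 1)) i]
    simp [Function.update_idem]
  rw [monomialT_decomp (k := k) (d := d) I i, ← mul_assoc, del_mul_t_pow, add_mul,
    mul_assoc, hQ.eq, ← mul_assoc, smul_mul_assoc, hd, ← monomialT_decomp]

lemma monomialT_mul_t (I : Fin d → ℕ) (i : Fin d) :
    monomialT k d I * t k d i = monomialT k d (I + Pi.single i 1) := by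
  rw [monomialT_add, monomialT_single, pow_one]

lemma monomialD_mul_del (J : Fin d → ℕ) (i : Fin d) :
    monomialD k d J * del k d i = monomialD k d (J + Pi.single i 1) := by
  rw [monomialD_add, monomialD_single, pow_one]

/-- Right multiplication of a full monomial by `t i`. -/
lemma mono_mul_t (I J : Fin d → ℕ) (i : Fin d) :
    (monomialT k d I * monomialD k d J) * t k d i
      = monomialT k d (I + Pi.single i 1) * monomialD k d J
        + (J i) • (monomialT k d I * monomialD k d (J - Pi.single i 1)) := by
  rw [mul_assoc, monomialD_mul_t, mul_add, ← mul_assoc, monomialT_mul_t, mul_smul_comm]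

/-- Right multiplication of a full monomial by `del i`. -/
lemma mono_mul_del (I J : Fin d → ℕ) (i : Fin d) :
    (monomialT k d I * monomialD k d J) * del k d i
      = monomialT k d I * monomialD k d (J + Pi.single i 1) := by
  rw [mul_assoc, monomialD_mul_del]

/-- Left multiplication of a full monomial by `t i`. -/
lemma t_mul_mono (I J : Fin d → ℕ) (i : Fin d) :
    t k d i * (monomialT k d I * monomialD k d J)
      = monomialT k d (I + Pi.single i 1) * monomialD k d J := by
  rw [← mul_assoc, (t_commute_monomialT i I).eq, monomialT_mul_t]

/-- Left multiplication of a full monomial by `del i`. -/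
lemma del_mul_mono (I J : Fin d → ℕ) (i : Fin d) :
    del k d i * (monomialT k d I * monomialD k d J)
      = monomialT k d I * monomialD k d (J + Pi.single i 1)
        + (I i) • (monomialT k d (I - Pi.single i 1) * monomialD k d J) := by
  rw [← mul_assoc, del_mul_monomialT, add_mul, smul_mul_assoc, mul_assoc,
    (del_commute_monomialD i J).eq, monomialD_mul_del]

end Weyl

namespace Weyl

open WeylAlgebra MvPolynomial

variable {k : Type*} [CommRing k] {d : ℕ}

lemma pderiv_comm' {σ : Type*} (i j : σ) (f : MvPolynomial σ k) :
    pderiv i (pderiv j f) = pderiv j (pderiv i f) := by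
  classical
  induction f using MvPolynomial.induction_on' with
  | monomial s a =>
    simp only [pderiv_monomial]
    by_cases hij : i = j
    · subst hij; rfl
    · have h1 : s - Finsupp.single j 1 - Finsupp.single i 1
          = s - Finsupp.single i 1 - Finsupp.single j 1 := tsub_right_comm
      have h2 : (s - Finsupp.single j 1 : σ →₀ ℕ) i = s i := by
        rw [Finsupp.tsub_apply, Finsupp.single_eq_of_ne hij, Nat.sub_zero]
      have h3 : (s - Finsupp.single i 1 : σ →₀ ℕ) j = s j := by
        rw [Finsupp.tsub_apply, Finsupp.single_eq_of_ne (fun h => hij h.symm), Nat.sub_zero]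
      rw [h1, h2, h3, mul_right_comm]
  | add p q hp hq => simp [hp, hq]

variable (k d)

/-- The polynomial ring on variables `x_i` (`Sum.inl`) and `y_i` (`Sum.inr`). -/
abbrev Pol := MvPolynomial (Fin d ⊕ Fin d) k

/-- generators of the faithful representation. -/
def rgen : Fin d ⊕ Fin d → Module.End k (Pol k d) :=
  Sum.elim (fun i => LinearMap.mulLeft k (X (Sum.inl i)))
    (fun i => (pderiv (Sum.inl i)).toLinearMap + LinearMap.mulLeft k (X (Sum.inr i)))

lemma rgen_rel : ∀ ⦃x y⦄, WeylRel k d x y →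
    (FreeAlgebra.lift k (rgen k d)) x = (FreeAlgebra.lift k (rgen k d)) y := by
  intro x y h
  cases h with
  | tt i j =>
    simp only [map_mul, FreeAlgebra.lift_ι_apply, rgen, Sum.elim_inl]
    refine LinearMap.ext fun f => ?_
    simp only [Module.End.mul_apply, LinearMap.mulLeft_apply]
    ring
  | dd i j =>
    simp only [map_mul, FreeAlgebra.lift_ι_apply, rgen, Sum.elim_inr]
    refine LinearMap.ext fun f => ?_
    simp only [Module.End.mul_apply, LinearMap.add_apply, LinearMap.mulLeft_apply,
      Derivation.coeFn_coe, map_add, pderiv_mul, map_mul]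
    rw [pderiv_X_of_ne (by simp), pderiv_X_of_ne (by simp), pderiv_comm' (Sum.inl i) (Sum.inl j) f]
    ring
  | dt i j =>
    by_cases hij : i = j
    · subst hij
      rw [if_pos rfl]
      simp only [map_mul, map_add, map_one, FreeAlgebra.lift_ι_apply, rgen,
        Sum.elim_inl, Sum.elim_inr]
      refine LinearMap.ext fun f => ?_
      simp only [Module.End.mul_apply, LinearMap.add_apply, LinearMap.mulLeft_apply,
        Module.End.one_apply, Derivation.coeFn_coe, pderiv_mul, pderiv_X_self]
      ring
    · rw [if_neg hij, add_zero]
      simp only [map_mul, FreeAlgebra.lift_ι_apply, rgen, Sum.elim_inl, Sum.elim_inr]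
      refine LinearMap.ext fun f => ?_
      simp only [Module.End.mul_apply, LinearMap.add_apply, LinearMap.mulLeft_apply,
        Derivation.coeFn_coe, pderiv_mul]
      rw [pderiv_X_of_ne (show Sum.inl j ≠ Sum.inl i from fun h => hij (Sum.inl.inj h).symm)]
      ring

/-- The representation of the Weyl algebra on polynomials. -/
def rep : WeylAlgebra k d →ₐ[k] Module.End k (Pol k d) :=
  RingQuot.liftAlgHom k ⟨FreeAlgebra.lift k (rgen k d), rgen_rel k d⟩

lemma rep_t (i : Fin d) : rep k d (t k d i) = LinearMap.mulLeft k (X (Sum.inl i)) := by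
  rw [rep, t, RingQuot.liftAlgHom_mkAlgHom_apply, FreeAlgebra.lift_ι_apply, rgen, Sum.elim_inl]

lemma rep_del (i : Fin d) : rep k d (del k d i)
    = (pderiv (Sum.inl i)).toLinearMap + LinearMap.mulLeft k (X (Sum.inr i)) := by
  rw [rep, del, RingQuot.liftAlgHom_mkAlgHom_apply, FreeAlgebra.lift_ι_apply, rgen, Sum.elim_inr]

end Weyl

namespace Weyl

open WeylAlgebra MvPolynomial

variable (k : Type*) [CommRing k] (d : ℕ)

/-- Evaluation of the representation at the constant polynomial 1. -/
def Phi : WeylAlgebra k d →ₗ[k] Pol k d :=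
  (LinearMap.applyₗ (1 : Pol k d)).comp (rep k d).toLinearMap

variable {k d}

def NoX (q : Pol k d) : Prop := ∀ i : Fin d, pderiv (Sum.inl i) q = 0

lemma noX_one : NoX (1 : Pol k d) := fun i => pderiv_one

lemma noX_Ymul (i : Fin d) (n : ℕ) (q : Pol k d) (hq : NoX q) :
    NoX (X (Sum.inr i) ^ n * q) := by
  intro i'
  rw [pderiv_mul, hq i', mul_zero, add_zero, pderiv_pow,
    pderiv_X_of_ne (show Sum.inr i ≠ Sum.inl i' from by simp), mul_zero, zero_mul]

lemma rep_del_pow_apply (i : Fin d) (n : ℕ) (q : Pol k d) (hq : NoX q) :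
    ((rep k d (del k d i)) ^ n) q = X (Sum.inr i) ^ n * q := by
  induction n with
  | zero => simp
  | succ n ih =>
    rw [pow_succ', Module.End.mul_apply, ih, rep_del, LinearMap.add_apply,
      Derivation.coeFn_coe, LinearMap.mulLeft_apply, noX_Ymul i n q hq i, zero_add,
      ← mul_assoc, ← pow_succ']

lemma noX_Yprod (J : Fin d → ℕ) (l : List (Fin d)) (q : Pol k d) (hq : NoX q) :
    NoX ((l.map fun i => X (Sum.inr i) ^ J i).prod * q) := by
  induction l with
  | nil => simpa using hq
  | cons a l ih =>
    rw [List.map_cons, List.prod_cons, mul_assoc]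
    exact noX_Ymul a (J a) _ ih

lemma rep_del_list_apply (J : Fin d → ℕ) (l : List (Fin d)) (q : Pol k d) (hq : NoX q) :
    ((l.map fun i => (rep k d (del k d i)) ^ J i).prod) q
      = (l.map fun i => X (Sum.inr i) ^ J i).prod * q := by
  induction l with
  | nil => simp
  | cons a l ih =>
    rw [List.map_cons, List.prod_cons, Module.End.mul_apply, ih,
      rep_del_pow_apply a (J a) _ (noX_Yprod J l q hq), List.map_cons, List.prod_cons,
      mul_assoc]

lemma rep_t_pow_apply (i : Fin d) (n : ℕ) (r : Pol k d) :
    ((rep k d (t k d i)) ^ n) r = X (Sum.inl i) ^ n * r := by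
  induction n with
  | zero => simp
  | succ n ih =>
    rw [pow_succ', Module.End.mul_apply, ih, rep_t, LinearMap.mulLeft_apply, ← mul_assoc,
      ← pow_succ']

lemma rep_t_list_apply (I : Fin d → ℕ) (l : List (Fin d)) (r : Pol k d) :
    ((l.map fun i => (rep k d (t k d i)) ^ I i).prod) r
      = (l.map fun i => X (Sum.inl i) ^ I i).prod * r := by
  induction l with
  | nil => simp
  | cons a l ih =>
    rw [List.map_cons, List.prod_cons, Module.End.mul_apply, ih, rep_t_pow_apply,
      List.map_cons, List.prod_cons, mul_assoc]

lemma Phi_mono (I J : Fin d → ℕ) :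
    Phi k d (monomialT k d I * monomialD k d J)
      = ((List.finRange d).map fun i => X (Sum.inl i) ^ I i).prod
        * ((List.finRange d).map fun i => X (Sum.inr i) ^ J i).prod := by
  have hT : rep k d (monomialT k d I)
      = ((List.finRange d).map fun i => (rep k d (t k d i)) ^ I i).prod := by
    rw [monomialT, map_list_prod, List.map_map]
    congr 1
    apply List.map_congr_left
    intro a _
    simp [map_pow]
  have hD : rep k d (monomialD k d J)
      = ((List.finRange d).map fun i => (rep k d (del k d i)) ^ J i).prod := by
    rw [monomialD, map_list_prod, List.map_map]
    congr 1
    apply List.map_congr_left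
    intro a _
    simp [map_pow]
  show rep k d _ 1 = _
  rw [map_mul, Module.End.mul_apply, hT, hD,
    rep_del_list_apply J _ 1 noX_one, mul_one, rep_t_list_apply]

variable (d) in
/-- Exponent bookkeeping. -/
def expo (s : (Fin d → ℕ) × (Fin d → ℕ)) : (Fin d ⊕ Fin d) →₀ ℕ :=
  Finsupp.equivFunOnFinite.symm (Sum.elim s.1 s.2)

lemma expo_apply (s) (v : Fin d ⊕ Fin d) : expo d s v = Sum.elim s.1 s.2 v := rfl

lemma expo_inj : Function.Injective (expo d) := by
  intro s s' h
  have h' : Sum.elim s.1 s.2 = Sum.elim s'.1 s'.2 :=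
    Finsupp.equivFunOnFinite.symm.injective h
  ext i
  · exact congrFun h' (Sum.inl i)
  · exact congrFun h' (Sum.inr i)

lemma Phi_mono_eq (s : (Fin d → ℕ) × (Fin d → ℕ)) :
    Phi k d (monomialT k d s.1 * monomialD k d s.2) = monomial (expo d s) 1 := by
  rw [Phi_mono, monomial_eq, map_one, one_mul,
    Finsupp.prod_fintype _ _ (fun v => pow_zero _), Fintype.prod_sum_type]
  rw [Fin.prod_univ_def, Fin.prod_univ_def]
  congr 1

lemma mono_li :
    LinearIndependent k (fun s : (Fin d → ℕ) × (Fin d → ℕ) =>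
      monomialT k d s.1 * monomialD k d s.2) := by
  apply LinearIndependent.of_comp (Phi k d)
  have : (Phi k d ∘ fun s : (Fin d → ℕ) × (Fin d → ℕ) =>
      monomialT k d s.1 * monomialD k d s.2)
      = (fun e => monomial e (1 : k)) ∘ expo d := by
    funext s
    exact Phi_mono_eq s
  rw [this]
  have hb := (basisMonomials (Fin d ⊕ Fin d) k).linearIndependent
  rw [coe_basisMonomials] at hb
  exact hb.comp (expo d) expo_inj

variable (k d)

lemma adjoin_TD_top :
    Algebra.adjoin k (Set.range (t k d) ∪ Set.range (del k d)) = ⊤ := by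
  have hsurj := RingQuot.mkAlgHom_surjective k (WeylRel k d)
  have h1 : (⊤ : Subalgebra k (FreeAlgebra k (Fin d ⊕ Fin d))).map
      (RingQuot.mkAlgHom k (WeylRel k d)) = ⊤ := by
    rw [Algebra.map_top, (AlgHom.range_eq_top _).mpr hsurj]
  rw [← h1, ← FreeAlgebra.adjoin_range_ι, AlgHom.map_adjoin]
  congr 1
  rw [← Set.range_comp, Sum.range_eq]
  rfl

lemma one_mem_mono_range :
    (1 : WeylAlgebra k d) ∈ Set.range (fun s : (Fin d → ℕ) × (Fin d → ℕ) =>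
      monomialT k d s.1 * monomialD k d s.2) :=
  ⟨(0, 0), by simp [monomialT_zero, monomialD_zero]⟩

lemma mono_span :
    Submodule.span k (Set.range fun s : (Fin d → ℕ) × (Fin d → ℕ) =>
      monomialT k d s.1 * monomialD k d s.2) = ⊤ := by
  set S := Submodule.span k (Set.range fun s : (Fin d → ℕ) × (Fin d → ℕ) =>
      monomialT k d s.1 * monomialD k d s.2) with hS
  rw [eq_top_iff]
  intro x hxtop
  clear hxtop
  have hx : x ∈ Algebra.adjoin k (Set.range (t k d) ∪ Set.range (del k d)) := by
    rw [adjoin_TD_top]; trivial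
  have key : ∀ w ∈ S, w * x ∈ S := by
    induction hx using Algebra.adjoin_induction with
    | mem g hg =>
      intro w hw
      induction hw using Submodule.span_induction with
      | mem m hm =>
        obtain ⟨s, rfl⟩ := hm
        rcases hg with ⟨i, rfl⟩ | ⟨i, rfl⟩
        · rw [mono_mul_t]
          exact add_mem (Submodule.subset_span ⟨(s.1 + Pi.single i 1, s.2), rfl⟩)
            (Submodule.smul_mem _ _ (Submodule.subset_span ⟨(s.1, s.2 - Pi.single i 1), rfl⟩))
        · rw [mono_mul_del]
          exact Submodule.subset_span ⟨(s.1, s.2 + Pi.single i 1), rfl⟩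
      | zero => rw [zero_mul]; exact zero_mem S
      | add a b _ _ ha hb => rw [add_mul]; exact add_mem ha hb
      | smul c a _ ha => rw [smul_mul_assoc]; exact Submodule.smul_mem _ _ ha
    | algebraMap r =>
      intro w hw
      rw [← Algebra.commutes r w, ← Algebra.smul_def]
      exact Submodule.smul_mem _ _ hw
    | add a b _ _ ha hb =>
      intro w hw
      rw [mul_add]
      exact add_mem (ha w hw) (hb w hw)
    | mul a b _ _ ha hb =>
      intro w hw
      rw [← mul_assoc]
      exact hb _ (ha w hw)
  have h1 : (1 : WeylAlgebra k d) ∈ S := Submodule.subset_span (one_mem_mono_range k d)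
  simpa using key 1 h1

/-- The `k`-basis of the Weyl algebra given by the monomials `t^I ∂^J`. -/
def kBasis : Module.Basis ((Fin d → ℕ) × (Fin d → ℕ)) k (WeylAlgebra k d) :=
  Module.Basis.mk mono_li (by rw [mono_span])

lemma kBasis_apply (s : (Fin d → ℕ) × (Fin d → ℕ)) :
    kBasis k d s = monomialT k d s.1 * monomialD k d s.2 := Module.Basis.mk_apply _ _ _

end Weyl

namespace Weyl

open WeylAlgebra MvPolynomial

variable {k : Type*} [CommRing k] {d : ℕ} {p : ℕ}

lemma nsmul_p_eq_zero (hchar : (p : k) = 0) (x : WeylAlgebra k d) : p • x = 0 := by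
  rw [← Nat.cast_smul_eq_nsmul k, hchar, zero_smul]

lemma unit_of_not_dvd (hp : p.Prime) (hchar : (p : k) = 0) {n : ℕ} (h : ¬ p ∣ n) :
    IsUnit (n : k) := by
  have hco : Nat.Coprime p n := (Nat.Prime.coprime_iff_not_dvd hp).mpr h
  obtain ⟨u, v, huv⟩ := Nat.isCoprime_iff_coprime.mpr hco
  have h2 := congrArg (fun z : ℤ => (z : k)) huv
  push_cast at h2
  rw [hchar, mul_zero, zero_add] at h2
  exact IsUnit.of_mul_eq_one _ (by rw [mul_comm]; exact h2)

lemma mem_center_of_commutes (z : WeylAlgebra k d)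
    (h1 : ∀ j, t k d j * z = z * t k d j) (h2 : ∀ j, del k d j * z = z * del k d j) :
    z ∈ Subring.center (WeylAlgebra k d) := by
  rw [Subring.mem_center_iff]
  intro g
  have hg : g ∈ Algebra.adjoin k (Set.range (t k d) ∪ Set.range (del k d)) := by
    rw [adjoin_TD_top]; trivial
  induction hg using Algebra.adjoin_induction with
  | mem x hx => rcases hx with ⟨i, rfl⟩ | ⟨i, rfl⟩; exacts [h1 i, h2 i]
  | algebraMap r => exact Algebra.commutes r z
  | add a b _ _ ha hb => rw [add_mul, mul_add, ha, hb]
  | mul a b _ _ ha hb => rw [mul_assoc, hb, ← mul_assoc, ha, mul_assoc]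

lemma t_pow_p_central (hchar : (p : k) = 0) (i : Fin d) :
    t k d i ^ p ∈ Subring.center (WeylAlgebra k d) := by
  apply mem_center_of_commutes
  · intro j; exact ((t_comm j i).pow_right p).eq
  · intro j
    by_cases hji : j = i
    · subst hji
      rw [del_mul_t_pow, nsmul_p_eq_zero hchar, add_zero]
    · exact ((del_t_commute hji).pow_right p).eq

lemma del_pow_p_central (hchar : (p : k) = 0) (i : Fin d) :
    del k d i ^ p ∈ Subring.center (WeylAlgebra k d) := by
  apply mem_center_of_commutes
  · intro j
    by_cases hji : i = j
    · subst hji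
      have := del_pow_mul_t (k := k) (d := d) i p
      rw [nsmul_p_eq_zero hchar, add_zero] at this
      exact this.symm
    · exact ((del_t_commute hji).symm.pow_right p).eq
  · intro j; exact ((del_comm j i).pow_right p).eq

lemma monoTP_central (hchar : (p : k) = 0) (A : Fin d → ℕ) :
    monomialT k d (fun i => p * A i) ∈ Subring.center (WeylAlgebra k d) := by
  rw [monomialT]
  apply list_prod_mem
  intro x hx
  obtain ⟨i, _, rfl⟩ := List.mem_map.mp hx
  rw [pow_mul]
  exact pow_mem (t_pow_p_central hchar i) _

lemma monoDP_central (hchar : (p : k) = 0) (B : Fin d → ℕ) :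
    monomialD k d (fun i => p * B i) ∈ Subring.center (WeylAlgebra k d) := by
  rw [monomialD]
  apply list_prod_mem
  intro x hx
  obtain ⟨i, _, rfl⟩ := List.mem_map.mp hx
  rw [pow_mul]
  exact pow_mem (del_pow_p_central hchar i) _

lemma monoP_mul_mono (hchar : (p : k) = 0) (A B I J : Fin d → ℕ) :
    (monomialT k d (fun i => p * A i) * monomialD k d (fun i => p * B i))
      * (monomialT k d I * monomialD k d J)
    = monomialT k d ((fun i => p * A i) + I) * monomialD k d ((fun i => p * B i) + J) := by
  have hc := Subring.mem_center_iff.mp (monoDP_central hchar B) (monomialT k d I)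
  rw [monomialT_add, monomialD_add]
  calc (monomialT k d (fun i => p * A i) * monomialD k d (fun i => p * B i))
      * (monomialT k d I * monomialD k d J)
      = monomialT k d (fun i => p * A i)
        * ((monomialT k d I * monomialD k d (fun i => p * B i)) * monomialD k d J) := by
        rw [mul_assoc, ← mul_assoc (monomialD k d fun i => p * B i), hc]
    _ = monomialT k d (fun i => p * A i) * monomialT k d I
        * (monomialD k d (fun i => p * B i) * monomialD k d J) := by
        rw [mul_assoc, mul_assoc]

lemma mono_eq_central_mul (hchar : (p : k) = 0) (s : (Fin d → ℕ) × (Fin d → ℕ)) :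
    monomialT k d s.1 * monomialD k d s.2
    = (monomialT k d (fun i => p * (s.1 i / p)) * monomialD k d (fun i => p * (s.2 i / p)))
      * (monomialT k d (fun i => s.1 i % p) * monomialD k d (fun i => s.2 i % p)) := by
  rw [monoP_mul_mono hchar]
  congr 1
  · congr 1
    funext i
    simp only [Pi.add_apply]
    exact (Nat.div_add_mod (s.1 i) p).symm
  · congr 1
    funext i
    simp only [Pi.add_apply]
    exact (Nat.div_add_mod (s.2 i) p).symm

end Weyl

namespace Weyl

open WeylAlgebra

variable {k : Type*} [CommRing k] {d : ℕ} {p : ℕ}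

lemma eval_helper (c : ((Fin d → ℕ) × (Fin d → ℕ)) →₀ k)
    (u : ((Fin d → ℕ) × (Fin d → ℕ)) → k)
    (τ : ((Fin d → ℕ) × (Fin d → ℕ)) → ((Fin d → ℕ) × (Fin d → ℕ)))
    (hsum : (c.sum fun s a => (a * u s) • kBasis k d (τ s)) = 0)
    (s₀ : (Fin d → ℕ) × (Fin d → ℕ))
    (hw : ∀ s ∈ c.support, s ≠ s₀ → τ s = τ s₀ → u s = 0) :
    c s₀ * u s₀ = 0 := by
  classical
  by_cases hmem : s₀ ∈ c.support
  · have h1 : ((kBasis k d).repr (c.sum fun s a => (a * u s) • kBasis k d (τ s))) (τ s₀)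
        = 0 := by rw [hsum]; simp
    rw [map_finsuppSum] at h1
    simp only [map_smul, Module.Basis.repr_self] at h1
    rw [Finsupp.sum_apply] at h1
    simp only [Finsupp.smul_apply, Finsupp.single_apply, smul_eq_mul] at h1
    rw [Finsupp.sum, Finset.sum_eq_single_of_mem s₀ hmem] at h1
    · simpa using h1
    · intro s hs hne
      by_cases hts : τ s = τ s₀
      · rw [hw s hs hne hts, mul_zero, zero_mul]
      · rw [if_neg hts, mul_zero]
  · rw [Finsupp.notMem_support_iff.mp hmem, zero_mul]

lemma center_commutator_del (z : WeylAlgebra k d)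
    (hz : z ∈ Subring.center (WeylAlgebra k d)) (i : Fin d) :
    (((kBasis k d).repr z).sum fun s a =>
      (a * (s.1 i : k)) • kBasis k d (s.1 - Pi.single i 1, s.2)) = 0 := by
  set c := (kBasis k d).repr z with hc
  have hzz : z = c.sum fun s a => a • kBasis k d s := by
    rw [hc, ← Finsupp.linearCombination_apply, Module.Basis.linearCombination_repr]
  have h0 : del k d i * z - z * del k d i = 0 := by
    rw [Subring.mem_center_iff.mp hz (del k d i), sub_self]
  have hL : del k d i * z = c.sum fun s a =>
      a • (monomialT k d s.1 * monomialD k d (s.2 + Pi.single i 1))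
        + (a * (s.1 i : k)) • kBasis k d (s.1 - Pi.single i 1, s.2) := by
    rw [hzz, Finsupp.mul_sum]
    apply Finsupp.sum_congr
    intro s _
    rw [mul_smul_comm, kBasis_apply, del_mul_mono, smul_add]
    congr 1
    rw [← Nat.cast_smul_eq_nsmul k (s.1 i), smul_smul, kBasis_apply]
  have hR : z * del k d i = c.sum fun s a =>
      a • (monomialT k d s.1 * monomialD k d (s.2 + Pi.single i 1)) := by
    rw [hzz, Finsupp.sum_mul]
    apply Finsupp.sum_congr
    intro s _
    rw [smul_mul_assoc, kBasis_apply, mono_mul_del]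
  rw [hL, hR] at h0
  rw [← h0]
  rw [← Finsupp.sum_sub]
  apply Finsupp.sum_congr
  intro s _
  abel

lemma center_commutator_t (z : WeylAlgebra k d)
    (hz : z ∈ Subring.center (WeylAlgebra k d)) (i : Fin d) :
    (((kBasis k d).repr z).sum fun s a =>
      (a * (s.2 i : k)) • kBasis k d (s.1, s.2 - Pi.single i 1)) = 0 := by
  set c := (kBasis k d).repr z with hc
  have hzz : z = c.sum fun s a => a • kBasis k d s := by
    rw [hc, ← Finsupp.linearCombination_apply, Module.Basis.linearCombination_repr]
  have h0 : z * t k d i - t k d i * z = 0 := by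
    rw [Subring.mem_center_iff.mp hz (t k d i), sub_self]
  have hL : z * t k d i = c.sum fun s a =>
      a • (monomialT k d (s.1 + Pi.single i 1) * monomialD k d s.2)
        + (a * (s.2 i : k)) • kBasis k d (s.1, s.2 - Pi.single i 1) := by
    rw [hzz, Finsupp.sum_mul]
    apply Finsupp.sum_congr
    intro s _
    rw [smul_mul_assoc, kBasis_apply, mono_mul_t, smul_add]
    congr 1
    rw [← Nat.cast_smul_eq_nsmul k (s.2 i), smul_smul, kBasis_apply]
  have hR : t k d i * z = c.sum fun s a =>
      a • (monomialT k d (s.1 + Pi.single i 1) * monomialD k d s.2) := by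
    rw [hzz, Finsupp.mul_sum]
    apply Finsupp.sum_congr
    intro s _
    rw [mul_smul_comm, kBasis_apply, t_mul_mono]
  rw [hL, hR] at h0
  rw [← h0]
  rw [← Finsupp.sum_sub]
  apply Finsupp.sum_congr
  intro s _
  abel

lemma center_support_dvd (hp : p.Prime) (hchar : (p : k) = 0) (z : WeylAlgebra k d)
    (hz : z ∈ Subring.center (WeylAlgebra k d)) :
    ∀ s₀ ∈ ((kBasis k d).repr z).support, (∀ i, p ∣ s₀.1 i) ∧ (∀ i, p ∣ s₀.2 i) := by
  intro s₀ hs₀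
  have hcne : ((kBasis k d).repr z) s₀ ≠ 0 := Finsupp.mem_support_iff.mp hs₀
  constructor
  · intro i
    by_contra hnd
    have hne0 : s₀.1 i ≠ 0 := fun h => hnd (h ▸ dvd_zero p)
    have key := eval_helper ((kBasis k d).repr z) (fun s => (s.1 i : k))
      (fun s => (s.1 - Pi.single i 1, s.2)) (center_commutator_del z hz i) s₀ ?_
    · obtain ⟨w, hw⟩ := (unit_of_not_dvd hp hchar hnd).exists_right_inv
      apply hcne
      calc ((kBasis k d).repr z) s₀
          = ((kBasis k d).repr z) s₀ * ((s₀.1 i : k) * w) := by rw [hw, mul_one]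
        _ = (((kBasis k d).repr z) s₀ * (s₀.1 i : k)) * w := by rw [mul_assoc]
        _ = 0 := by rw [key, zero_mul]
    · intro s _ hne hts
      simp only [Prod.mk.injEq] at hts
      have h2 : s.2 = s₀.2 := hts.2
      have h1 : s.1 - Pi.single i 1 = s₀.1 - Pi.single i 1 := hts.1
      by_cases hzero : s.1 i = 0
      · simp [hzero]
      · exfalso
        apply hne
        have h11 : s.1 = s₀.1 := by
          funext j
          by_cases hj : j = i
          · subst hj
            have := congrFun h1 j
            simp only [Pi.sub_apply, Pi.single_eq_same] at this
            omega
          · have := congrFun h1 j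
            simp only [Pi.sub_apply, Pi.single_eq_of_ne hj] at this
            omega
        exact Prod.ext h11 h2
  · intro i
    by_contra hnd
    have hne0 : s₀.2 i ≠ 0 := fun h => hnd (h ▸ dvd_zero p)
    have key := eval_helper ((kBasis k d).repr z) (fun s => (s.2 i : k))
      (fun s => (s.1, s.2 - Pi.single i 1)) (center_commutator_t z hz i) s₀ ?_
    · obtain ⟨w, hw⟩ := (unit_of_not_dvd hp hchar hnd).exists_right_inv
      apply hcne
      calc ((kBasis k d).repr z) s₀
          = ((kBasis k d).repr z) s₀ * ((s₀.2 i : k) * w) := by rw [hw, mul_one]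
        _ = (((kBasis k d).repr z) s₀ * (s₀.2 i : k)) * w := by rw [mul_assoc]
        _ = 0 := by rw [key, zero_mul]
    · intro s _ hne hts
      simp only [Prod.mk.injEq] at hts
      have h2 : s.1 = s₀.1 := hts.1
      have h1 : s.2 - Pi.single i 1 = s₀.2 - Pi.single i 1 := hts.2
      by_cases hzero : s.2 i = 0
      · simp [hzero]
      · exfalso
        apply hne
        have h22 : s.2 = s₀.2 := by
          funext j
          by_cases hj : j = i
          · subst hj
            have := congrFun h1 j
            simp only [Pi.sub_apply, Pi.single_eq_same] at this
            omega
          · have := congrFun h1 j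
            simp only [Pi.sub_apply, Pi.single_eq_of_ne hj] at this
            omega
        exact Prod.ext h2 h22

end Weyl

namespace Weyl

open WeylAlgebra

variable {k : Type*} [CommRing k] {d : ℕ} {p : ℕ}

/-- The "big" central monomials `t^{pA} ∂^{pB}`. -/
def monoP (k : Type*) [CommRing k] (d p : ℕ) (s : (Fin d → ℕ) × (Fin d → ℕ)) :
    WeylAlgebra k d :=
  monomialT k d (fun i => p * s.1 i) * monomialD k d (fun i => p * s.2 i)

lemma monoP_central (hchar : (p : k) = 0) (s : (Fin d → ℕ) × (Fin d → ℕ)) :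
    monoP k d p s ∈ Subring.center (WeylAlgebra k d) :=
  mul_mem (monoTP_central hchar s.1) (monoDP_central hchar s.2)

lemma monoP_mem_adjoin (s : (Fin d → ℕ) × (Fin d → ℕ)) :
    monoP k d p s ∈ Algebra.adjoin k
      ((Set.range fun i : Fin d => t k d i ^ p) ∪
        (Set.range fun i : Fin d => del k d i ^ p)) := by
  apply mul_mem
  · rw [monomialT]
    apply list_prod_mem
    intro x hx
    obtain ⟨i, _, rfl⟩ := List.mem_map.mp hx
    rw [pow_mul]
    have hmem : t k d i ^ p ∈ (Set.range fun i : Fin d => t k d i ^ p) ∪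
        (Set.range fun i : Fin d => del k d i ^ p) := Set.mem_union_left _ ⟨i, rfl⟩
    exact pow_mem (Algebra.subset_adjoin hmem) _
  · rw [monomialD]
    apply list_prod_mem
    intro x hx
    obtain ⟨i, _, rfl⟩ := List.mem_map.mp hx
    rw [pow_mul]
    have hmem : del k d i ^ p ∈ (Set.range fun i : Fin d => t k d i ^ p) ∪
        (Set.range fun i : Fin d => del k d i ^ p) := Set.mem_union_right _ ⟨i, rfl⟩
    exact pow_mem (Algebra.subset_adjoin hmem) _

lemma kBasis_eq_monoP_of_dvd (s : (Fin d → ℕ) × (Fin d → ℕ))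
    (h1 : ∀ i, p ∣ s.1 i) (h2 : ∀ i, p ∣ s.2 i) :
    kBasis k d s = monoP k d p (fun i => s.1 i / p, fun i => s.2 i / p) := by
  rw [kBasis_apply, monoP]
  have e1 : s.1 = fun i => p * (s.1 i / p) := funext fun i => (Nat.mul_div_cancel' (h1 i)).symm
  have e2 : s.2 = fun i => p * (s.2 i / p) := funext fun i => (Nat.mul_div_cancel' (h2 i)).symm
  conv_lhs => rw [e1, e2]

lemma repr_expand (z : WeylAlgebra k d) :
    z = ((kBasis k d).repr z).sum fun s a => a • kBasis k d s := by
  rw [← Finsupp.linearCombination_apply, Module.Basis.linearCombination_repr]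

lemma center_eq_adjoin_pows (hp : p.Prime) (hchar : (p : k) = 0) :
    Subalgebra.center k (WeylAlgebra k d) =
      Algebra.adjoin k
        ((Set.range fun i : Fin d => t k d i ^ p) ∪
          (Set.range fun i : Fin d => del k d i ^ p)) := by
  apply le_antisymm
  · intro z hz
    have hz' : z ∈ Subring.center (WeylAlgebra k d) :=
      Subring.mem_center_iff.mpr fun g => Subalgebra.mem_center_iff.mp hz g
    rw [repr_expand z, Finsupp.sum]
    apply sum_mem
    intro s hs
    apply Subalgebra.smul_mem
    obtain ⟨h1, h2⟩ := center_support_dvd hp hchar z hz' s hs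
    rw [kBasis_eq_monoP_of_dvd s h1 h2]
    exact monoP_mem_adjoin _
  · apply Algebra.adjoin_le
    rintro x (⟨i, rfl⟩ | ⟨i, rfl⟩)
    · exact Subalgebra.mem_center_iff.mpr fun g =>
        Subring.mem_center_iff.mp (t_pow_p_central hchar i) g
    · exact Subalgebra.mem_center_iff.mpr fun g =>
        Subring.mem_center_iff.mp (del_pow_p_central hchar i) g

/-- The reduced monomials, indexed by exponents `< p`. -/
def redv (k : Type*) [CommRing k] (d p : ℕ) (IJ : (Fin d → Fin p) × (Fin d → Fin p)) :
    WeylAlgebra k d :=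
  monomialT k d (fun i => (IJ.1 i : ℕ)) * monomialD k d (fun i => (IJ.2 i : ℕ))

/-- combined exponents -/
def pc (d p : ℕ) (s : (Fin d → ℕ) × (Fin d → ℕ)) (IJ : (Fin d → Fin p) × (Fin d → Fin p)) :
    (Fin d → ℕ) × (Fin d → ℕ) :=
  (fun i => p * s.1 i + (IJ.1 i : ℕ), fun i => p * s.2 i + (IJ.2 i : ℕ))

lemma monoP_mul_redv (hchar : (p : k) = 0) (s : (Fin d → ℕ) × (Fin d → ℕ))
    (IJ : (Fin d → Fin p) × (Fin d → Fin p)) :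
    monoP k d p s * redv k d p IJ = kBasis k d (pc d p s IJ) := by
  rw [monoP, redv, monoP_mul_mono hchar, kBasis_apply]
  rfl

lemma pc_inj (hpos : 0 < p) {s s' : (Fin d → ℕ) × (Fin d → ℕ)}
    {IJ IJ' : (Fin d → Fin p) × (Fin d → Fin p)}
    (h : pc d p s IJ = pc d p s' IJ') : s = s' ∧ IJ = IJ' := by
  have key : ∀ (a r a' r' : ℕ), r < p → r' < p → p * a + r = p * a' + r' →
      r = r' ∧ a = a' := by
    intro a r a' r' h1 h2 heq
    have e1 : (p * a + r) % p = r := by rw [Nat.mul_add_mod, Nat.mod_eq_of_lt h1]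
    have e2 : (p * a' + r') % p = r' := by rw [Nat.mul_add_mod, Nat.mod_eq_of_lt h2]
    have hr : r = r' := by rw [← e1, heq, e2]
    subst hr
    exact ⟨rfl, Nat.eq_of_mul_eq_mul_left hpos (Nat.add_right_cancel heq)⟩
  simp only [pc, Prod.mk.injEq] at h
  obtain ⟨ha, hb⟩ := h
  have h1 := fun i => key (s.1 i) (IJ.1 i : ℕ) (s'.1 i) (IJ'.1 i : ℕ)
    (IJ.1 i).is_lt (IJ'.1 i).is_lt (congrFun ha i)
  have h2 := fun i => key (s.2 i) (IJ.2 i : ℕ) (s'.2 i) (IJ'.2 i : ℕ)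
    (IJ.2 i).is_lt (IJ'.2 i).is_lt (congrFun hb i)
  constructor
  · exact Prod.ext (funext fun i => (h1 i).2) (funext fun i => (h2 i).2)
  · refine Prod.ext (funext fun i => Fin.ext (h1 i).1) (funext fun i => Fin.ext (h2 i).1)

lemma center_mem_spanP (hp : p.Prime) (hchar : (p : k) = 0) (z : WeylAlgebra k d)
    (hz : z ∈ Subring.center (WeylAlgebra k d)) :
    z ∈ Submodule.span k (Set.range (monoP k d p)) := by
  rw [repr_expand z, Finsupp.sum]
  apply sum_mem
  intro s hs
  apply Submodule.smul_mem
  obtain ⟨h1, h2⟩ := center_support_dvd hp hchar z hz s hs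
  rw [kBasis_eq_monoP_of_dvd s h1 h2]
  exact Submodule.subset_span ⟨_, rfl⟩

lemma redv_span (hp : p.Prime) (hchar : (p : k) = 0) :
    ⊤ ≤ Submodule.span (Subring.center (WeylAlgebra k d)) (Set.range (redv k d p)) := by
  intro x _
  rw [repr_expand x, Finsupp.sum]
  apply sum_mem
  intro s _
  set Z := Subring.center (WeylAlgebra k d)
  set S := Submodule.span Z (Set.range (redv k d p))
  have hmem : kBasis k d s ∈ S := by
    have hdecomp : kBasis k d s
        = monoP k d p (fun i => s.1 i / p, fun i => s.2 i / p)
          * redv k d p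
            (fun i => ⟨s.1 i % p, Nat.mod_lt _ hp.pos⟩, fun i => ⟨s.2 i % p, Nat.mod_lt _ hp.pos⟩) := by
      rw [kBasis_apply, mono_eq_central_mul hchar s, monoP, redv]
    rw [hdecomp]
    have hz : (monoP k d p (fun i => s.1 i / p, fun i => s.2 i / p)) ∈ Z :=
      monoP_central hchar _
    exact Submodule.smul_mem S (⟨_, hz⟩ : Z) (Submodule.subset_span ⟨_, rfl⟩)
  have halg : algebraMap k (WeylAlgebra k d) (((kBasis k d).repr x) s) ∈ Z :=
    Subring.mem_center_iff.mpr fun g => (Algebra.commutes _ g).symm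
  have := Submodule.smul_mem S (⟨_, halg⟩ : Z) hmem
  have heq : (⟨_, halg⟩ : Z) • kBasis k d s = ((kBasis k d).repr x) s • kBasis k d s := by
    show algebraMap k (WeylAlgebra k d) _ * kBasis k d s = _
    rw [← Algebra.smul_def]
  rwa [heq] at this

lemma redv_li (hp : p.Prime) (hchar : (p : k) = 0) :
    LinearIndependent (Subring.center (WeylAlgebra k d)) (redv k d p) := by
  classical
  rw [Fintype.linearIndependent_iff]
  intro g hg IJ₀
  -- choose finsupp representations of the coefficients
  have hrep : ∀ IJ : (Fin d → Fin p) × (Fin d → Fin p),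
      ∃ c : ((Fin d → ℕ) × (Fin d → ℕ)) →₀ k,
        (c.sum fun s a => a • monoP k d p s) = (g IJ : WeylAlgebra k d) := by
    intro IJ
    have := center_mem_spanP hp hchar (g IJ : WeylAlgebra k d) (g IJ).2
    exact Finsupp.mem_span_range_iff_exists_finsupp.mp this
  choose c hc using hrep
  have hg' : (∑ IJ : (Fin d → Fin p) × (Fin d → Fin p),
      (c IJ).sum fun s a => a • kBasis k d (pc d p s IJ)) = 0 := by
    rw [← hg]
    apply Finset.sum_congr rfl
    intro IJ _
    have : (g IJ) • redv k d p IJ = (g IJ : WeylAlgebra k d) * redv k d p IJ := rfl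
    rw [this, ← hc IJ, Finsupp.sum_mul]
    apply Finsupp.sum_congr
    intro s _
    rw [smul_mul_assoc, monoP_mul_redv hchar]
  have hzero : ∀ s₀, (c IJ₀) s₀ = 0 := by
    intro s₀
    by_cases hmem : s₀ ∈ (c IJ₀).support
    · have H : ((kBasis k d).repr (∑ IJ : (Fin d → Fin p) × (Fin d → Fin p),
          (c IJ).sum fun s a => a • kBasis k d (pc d p s IJ))) (pc d p s₀ IJ₀) = 0 := by
        rw [hg']; simp
      rw [map_sum] at H
      have Hterm : ∀ IJ, (kBasis k d).repr ((c IJ).sum fun s a => a • kBasis k d (pc d p s IJ))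
          = (c IJ).sum fun s a => a • Finsupp.single (pc d p s IJ) 1 := by
        intro IJ
        rw [map_finsuppSum]
        apply Finsupp.sum_congr
        intro s _
        rw [map_smul, Module.Basis.repr_self]
      simp only [Hterm] at H
      rw [Finset.sum_apply'] at H
      have Happ : ∀ IJ, ((c IJ).sum fun s a => a • Finsupp.single (pc d p s IJ) (1:k))
            (pc d p s₀ IJ₀)
          = (c IJ).sum fun s a => a * (if pc d p s IJ = pc d p s₀ IJ₀ then 1 else 0) := by
        intro IJ
        rw [Finsupp.sum_apply]
        apply Finsupp.sum_congr
        intro s _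
        rw [Finsupp.smul_apply, Finsupp.single_apply, smul_eq_mul]
      simp only [Happ] at H
      rw [Finset.sum_eq_single_of_mem IJ₀ (Finset.mem_univ _)] at H
      · rw [Finsupp.sum, Finset.sum_eq_single_of_mem s₀ hmem] at H
        · simpa using H
        · intro s hs hne
          rw [if_neg, mul_zero]
          intro hpc
          exact hne (pc_inj hp.pos hpc).1
      · intro IJ _ hne
        rw [Finsupp.sum]
        apply Finset.sum_eq_zero
        intro s _
        rw [if_neg, mul_zero]
        intro hpc
        exact hne (pc_inj hp.pos hpc).2
    · exact Finsupp.notMem_support_iff.mp hmem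
  have hc0 : c IJ₀ = 0 := Finsupp.ext hzero
  have : (g IJ₀ : WeylAlgebra k d) = 0 := by
    rw [← hc IJ₀, hc0, Finsupp.sum_zero_index]
  exact Subtype.ext this

end Weyl

open WeylAlgebra in
/-- In characteristic `p`, the center `Z` of the `d`-th Weyl algebra `W` is the
`k`-subalgebra generated by `t_1^p,…,t_d^p,∂_1^p,…,∂_d^p`, and `W` is a free `Z`-module
of rank `p^{2d}` with basis the monomials `t^I ∂^J` with all exponents in `{0,…,p−1}`. -/
theorem weylAlgebra_center_and_free_over_center (p : ℕ) (hp : p.Prime)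
    (k : Type*) [CommRing k] (hchar : (p : k) = 0) (d : ℕ) (hd : 1 ≤ d) :
    Subalgebra.center k (WeylAlgebra k d) =
      Algebra.adjoin k
        ((Set.range fun i : Fin d => t k d i ^ p) ∪
          (Set.range fun i : Fin d => del k d i ^ p)) ∧
    ∃ b : Module.Basis ((Fin d → Fin p) × (Fin d → Fin p))
        (Subring.center (WeylAlgebra k d)) (WeylAlgebra k d),
      ∀ IJ : (Fin d → Fin p) × (Fin d → Fin p),
        b IJ = monomialT k d (fun i => (IJ.1 i : ℕ)) *
          monomialD k d fun i => (IJ.2 i : ℕ) := by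
  constructor
  · exact Weyl.center_eq_adjoin_pows hp hchar
  · refine ⟨Module.Basis.mk (Weyl.redv_li hp hchar) (Weyl.redv_span hp hchar), fun IJ => ?_⟩
    rw [Module.Basis.mk_apply]
    rfl
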